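/- Let D be a division ring, x, y ∈ Dˣ, and (R, C) a solution of the non-commutative (2,2)-system with commutator C and initial data C = x y x⁻¹ y⁻¹, R₀ = y x y⁻¹, R₁ = y. Then for every n ∈ ℤ (including all negative n), R_n belongs to the subsemiring of D generated by {x, x⁻¹, y, y⁻¹}; that is, every R_n is a non-commutative Laurent polynomial in x and y with non-negative integer coefficients. -/

import Mathlib

/-- A solution of the non-commutative `(2,2)`-system with commutator `C`. -/
def IsTwoTwoSolution {D : Type*} [DivisionRing D] (R : ℤ → Dˣ) (C : Dˣ) : Prop :=
  (∀ n : ℤ, (C : D) =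
      (((R (n + 1))⁻¹ : Dˣ) : D) * (R n : D) * (R (n + 1) : D) * (((R n)⁻¹ : Dˣ) : D)) ∧
  (∀ n : ℤ, (R (n + 1) : D) * (C : D) * (R (n - 1) : D) = (R n : D) ^ 2 + 1)

namespace TwoTwoAux

open MulOpposite in
/-- Push a unit to the opposite ring. -/
def opU {D : Type*} [DivisionRing D] (u : Dˣ) : (Dᵐᵒᵖ)ˣ :=
  ⟨op (u : D), op ((u⁻¹ : Dˣ) : D),
    by rw [← op_mul, Units.inv_mul, op_one],
    by rw [← op_mul, Units.mul_inv, op_one]⟩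

@[simp] lemma opU_val {D : Type*} [DivisionRing D] (u : Dˣ) :
    ((opU u : (Dᵐᵒᵖ)ˣ) : Dᵐᵒᵖ) = MulOpposite.op (u : D) := rfl

@[simp] lemma opU_inv {D : Type*} [DivisionRing D] (u : Dˣ) :
    (opU u)⁻¹ = opU u⁻¹ := Units.ext rfl

lemma opU_mul {D : Type*} [DivisionRing D] (u v : Dˣ) :
    opU (u * v) = opU v * opU u := Units.ext (by simp [Units.val_mul])

theorem forward {D : Type*} [DivisionRing D] (x y : Dˣ) (R : ℤ → Dˣ) (C : Dˣ)
    (h : IsTwoTwoSolution R C)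
    (hC : C = x * y * x⁻¹ * y⁻¹) (hR0 : R 0 = y * x * y⁻¹) (hR1 : R 1 = y) :
    ∀ n : ℤ, 0 ≤ n →
      (R n : D) ∈ Subsemiring.closure
        ({(x : D), ((x⁻¹ : Dˣ) : D), (y : D), ((y⁻¹ : Dˣ) : D)} : Set D) := by
  have cA : ∀ (u : Dˣ) (z : D), (u : D) * (((u⁻¹ : Dˣ) : D) * z) = z := fun u z => by
    rw [← mul_assoc, Units.mul_inv, one_mul]
  have cB : ∀ (u : Dˣ) (z : D), ((u⁻¹ : Dˣ) : D) * ((u : D) * z) = z := fun u z => by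
    rw [← mul_assoc, Units.inv_mul, one_mul]
  have iC : ∀ n : ℤ, C = (R (n+1))⁻¹ * R n * R (n+1) * (R n)⁻¹ := fun n =>
    Units.ext (by simpa only [Units.val_mul] using h.1 n)
  -- the multiplicative form of the recursion
  have hstar : ∀ n : ℤ, (R (n+1) : D)
      = ((R n : D) + (((R n)⁻¹ : Dˣ) : D)) * (((R (n-1))⁻¹ : Dˣ) : D) * (R n : D) := by
    intro n
    have u2 : R (n+1) = (R n)⁻¹ * (R n * R (n+1) * (R n)⁻¹ * R (n-1)) * (R (n-1))⁻¹ * R n := by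
      group
    have e1 : (R n : D) * (R (n+1) : D) * (((R n)⁻¹ : Dˣ) : D) * (R (n-1) : D)
        = (R n : D)^2 + 1 := by
      calc (R n : D) * (R (n+1) : D) * (((R n)⁻¹ : Dˣ) : D) * (R (n-1) : D)
          = ((R n * R (n+1) * (R n)⁻¹ * R (n-1) : Dˣ) : D) := by
            simp only [Units.val_mul]
        _ = ((R (n+1) * C * R (n-1) : Dˣ) : D) := by
            rw [show R (n+1) * C * R (n-1) = R n * R (n+1) * (R n)⁻¹ * R (n-1) from by
              rw [iC n]; group]
        _ = (R (n+1) : D) * (C : D) * (R (n-1) : D) := by simp only [Units.val_mul]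
        _ = (R n : D)^2 + 1 := h.2 n
    have e2 := congrArg (Units.val) u2
    simp only [Units.val_mul] at e2
    rw [e1] at e2
    rw [e2]
    simp only [pow_two, mul_add, add_mul, one_mul, mul_one, mul_assoc, cA, cB,
      Units.mul_inv, Units.inv_mul]
  -- linear recurrence with constant coefficients
  have LR : ∀ k : ℕ, (R ((k:ℤ)+2) : D) =
      ((x:D)*(x:D) + ((y:D)*(y:D) + 1)) * ((x⁻¹:Dˣ):D) * ((y⁻¹:Dˣ):D) * (R ((k:ℤ)+1) : D)
        - (C : D) * (R (k:ℤ) : D) := by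
    intro k
    induction k with
    | zero =>
      have s1 := hstar 1
      rw [show (1:ℤ)+1 = 2 from by norm_num, show (1:ℤ)-1 = 0 from by norm_num] at s1
      show (R 2 : D) = ((x:D)*(x:D) + ((y:D)*(y:D) + 1)) * ((x⁻¹:Dˣ):D) * ((y⁻¹:Dˣ):D)
          * (R 1 : D) - (C : D) * (R 0 : D)
      rw [s1, hR0, hR1, hC]
      simp only [mul_inv_rev, inv_inv, Units.val_mul, mul_add, add_mul, one_mul, mul_one,
        mul_assoc, cA, cB, Units.mul_inv, Units.inv_mul]
      abel
    | succ m ih =>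
      show (R ((m:ℤ)+3) : D) = ((x:D)*(x:D) + ((y:D)*(y:D) + 1)) * ((x⁻¹:Dˣ):D) * ((y⁻¹:Dˣ):D)
          * (R ((m:ℤ)+2) : D) - (C : D) * (R ((m:ℤ)+1) : D)
      have f1 := hstar ((m:ℤ)+2)
      rw [show (m:ℤ)+2+1 = (m:ℤ)+3 from by ring, show (m:ℤ)+2-1 = (m:ℤ)+1 from by ring] at f1
      have f2 := hstar ((m:ℤ)+1)
      rw [show (m:ℤ)+1+1 = (m:ℤ)+2 from by ring, show (m:ℤ)+1-1 = (m:ℤ) from by ring] at f2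
      have f3 := iC ((m:ℤ)+1)
      rw [show (m:ℤ)+1+1 = (m:ℤ)+2 from by ring] at f3
      set a := R ((m:ℤ)+1) with ha
      set b := R ((m:ℤ)+2) with hb
      set r := R (m:ℤ) with hr
      have h4 : (a : D) + ((a⁻¹:Dˣ):D) = (b : D) * ((a⁻¹:Dˣ):D) * (r : D) := by
        rw [f2]
        simp only [mul_assoc, cA, cB, Units.mul_inv, Units.inv_mul, mul_one, one_mul]
      have g1 : (r : D) = (a : D) * ((b⁻¹:Dˣ):D) * ((a : D) + ((a⁻¹:Dˣ):D)) := by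
        rw [h4]
        simp only [mul_assoc, cA, cB, Units.mul_inv, Units.inv_mul, mul_one, one_mul]
      have h5 : ((x:D)*(x:D) + ((y:D)*(y:D)+1)) * ((x⁻¹:Dˣ):D) * ((y⁻¹:Dˣ):D) * (a:D)
          = (b : D) + (C : D) * (r : D) := by
        rw [ih]; abel
      have h6 : ((x:D)*(x:D) + ((y:D)*(y:D)+1)) * ((x⁻¹:Dˣ):D) * ((y⁻¹:Dˣ):D)
          = ((b : D) + (C : D) * (r : D)) * ((a⁻¹:Dˣ):D) := by
        rw [← h5]
        simp only [mul_assoc, cA, cB, Units.mul_inv, Units.inv_mul, mul_one, one_mul]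
      have g2 : (r:D) * ((a⁻¹:Dˣ):D) * (b:D) - (a:D)
          = ((a * b⁻¹ * a⁻¹ * a⁻¹ * b : Dˣ) : D) := by
        rw [g1]
        simp only [Units.val_mul, mul_add, add_mul, mul_assoc, cA, cB, Units.mul_inv,
          Units.inv_mul, mul_one, one_mul]
        abel
      have key : (C : D) * ((r:D) * ((a⁻¹:Dˣ):D) * (b:D) - (a:D))
          = ((b⁻¹:Dˣ):D) * ((a⁻¹:Dˣ):D) * (b:D) := by
        rw [g2]
        simp only [← Units.val_mul]
        exact congrArg Units.val (by rw [f3]; group)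
      calc (R ((m:ℤ)+3) : D)
          = ((b:D) + ((b⁻¹:Dˣ):D)) * ((a⁻¹:Dˣ):D) * (b:D) := f1
        _ = (b:D) * ((a⁻¹:Dˣ):D) * (b:D)
              + (C:D) * ((r:D) * ((a⁻¹:Dˣ):D) * (b:D) - (a:D)) := by
            rw [key]; simp only [add_mul]
        _ = ((b:D) + (C:D)*(r:D)) * ((a⁻¹:Dˣ):D) * (b:D) - (C:D) * (a:D) := by
            simp only [mul_sub, add_mul, mul_assoc]; abel
        _ = _ := by rw [← h6]
  -- membership tools
  have hX : (x:D) ∈ Subsemiring.closure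
      ({(x : D), ((x⁻¹ : Dˣ) : D), (y : D), ((y⁻¹ : Dˣ) : D)} : Set D) :=
    Subsemiring.subset_closure (by simp)
  have hX' : ((x⁻¹:Dˣ):D) ∈ Subsemiring.closure
      ({(x : D), ((x⁻¹ : Dˣ) : D), (y : D), ((y⁻¹ : Dˣ) : D)} : Set D) :=
    Subsemiring.subset_closure (by simp)
  have hY : (y:D) ∈ Subsemiring.closure
      ({(x : D), ((x⁻¹ : Dˣ) : D), (y : D), ((y⁻¹ : Dˣ) : D)} : Set D) :=
    Subsemiring.subset_closure (by simp)
  have hY' : ((y⁻¹:Dˣ):D) ∈ Subsemiring.closure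
      ({(x : D), ((x⁻¹ : Dˣ) : D), (y : D), ((y⁻¹ : Dˣ) : D)} : Set D) :=
    Subsemiring.subset_closure (by simp)
  -- the positive two-component induction
  have main : ∀ k : ℕ, ((R ((k:ℤ)+1) : D) ∈ Subsemiring.closure
        ({(x : D), ((x⁻¹ : Dˣ) : D), (y : D), ((y⁻¹ : Dˣ) : D)} : Set D)
      ∧ ((x:D) * ((y⁻¹:Dˣ):D) * (R ((k:ℤ)+1) : D) - (C:D) * (R (k:ℤ) : D))
        ∈ Subsemiring.closure
        ({(x : D), ((x⁻¹ : Dˣ) : D), (y : D), ((y⁻¹ : Dˣ) : D)} : Set D)) := by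
    intro k
    induction k with
    | zero =>
      constructor
      · show (R 1 : D) ∈ _
        rw [hR1]; exact hY
      · show ((x:D) * ((y⁻¹:Dˣ):D) * (R 1 : D) - (C:D) * (R 0 : D)) ∈ _
        have hz : (x:D) * ((y⁻¹:Dˣ):D) * (R 1 : D) - (C:D) * (R 0 : D) = 0 := by
          rw [hR1, hR0, hC]
          simp only [Units.val_mul, mul_assoc, cA, cB, Units.mul_inv, Units.inv_mul,
            mul_one, one_mul]
          exact sub_self _
        rw [hz]; exact zero_mem _
    | succ m ih =>
      obtain ⟨ih1, ih2⟩ := ih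
      have pos1 : (R ((m:ℤ)+2) : D)
          = (((y:D)*(y:D) + 1) * ((x⁻¹:Dˣ):D) * ((y⁻¹:Dˣ):D)) * (R ((m:ℤ)+1) : D)
            + ((x:D) * ((y⁻¹:Dˣ):D) * (R ((m:ℤ)+1) : D) - (C:D) * (R (m:ℤ) : D)) := by
        rw [LR m]
        simp only [mul_add, add_mul, mul_sub, sub_mul, one_mul, mul_one, mul_assoc,
          cA, cB, Units.mul_inv, Units.inv_mul]
        abel
      have pos2 : (x:D) * ((y⁻¹:Dˣ):D) * (R ((m:ℤ)+2) : D) - (C:D) * (R ((m:ℤ)+1) : D)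
          = ((x:D) * ((y⁻¹:Dˣ):D) * ((x⁻¹:Dˣ):D) * ((y⁻¹:Dˣ):D)) * (R ((m:ℤ)+1) : D)
            + ((x:D) * ((y⁻¹:Dˣ):D))
              * ((x:D) * ((y⁻¹:Dˣ):D) * (R ((m:ℤ)+1) : D) - (C:D) * (R (m:ℤ) : D)) := by
        rw [LR m, hC]
        simp only [Units.val_mul, mul_add, add_mul, mul_sub, sub_mul, one_mul, mul_one,
          mul_assoc, cA, cB, Units.mul_inv, Units.inv_mul]
        abel
      constructor
      · show (R ((m:ℤ)+2) : D) ∈ _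
        rw [pos1]
        exact add_mem
          (mul_mem (mul_mem (mul_mem (add_mem (mul_mem hY hY) (one_mem _)) hX') hY') ih1) ih2
      · show ((x:D) * ((y⁻¹:Dˣ):D) * (R ((m:ℤ)+2) : D) - (C:D) * (R ((m:ℤ)+1) : D)) ∈ _
        rw [pos2]
        exact add_mem
          (mul_mem (mul_mem (mul_mem (mul_mem hX hY') hX') hY') ih1)
          (mul_mem (mul_mem hX hY') ih2)
  intro n hn
  obtain ⟨k, rfl⟩ := Int.eq_ofNat_of_zero_le hn
  cases k with
  | zero =>
    show (R 0 : D) ∈ _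
    rw [hR0]
    simp only [Units.val_mul]
    exact mul_mem (mul_mem hY hX) hY'
  | succ m =>
    have := (main m).1
    show (R ((m:ℤ)+1) : D) ∈ _
    exact this

end TwoTwoAux

/-- Positivity for the `(2,2)`-system, all indices: with initial data `C = x y x⁻¹ y⁻¹`,
`R₀ = y x y⁻¹`, `R₁ = y`, every `R_n` (`n ∈ ℤ`, including negative `n`) is a non-commutative
Laurent polynomial in `x, y` with non-negative integer coefficients, i.e. it lies in the
subsemiring of `D` generated by `{x, x⁻¹, y, y⁻¹}`. -/
theorem twotwo_positivity_all {D : Type*} [DivisionRing D] (x y : Dˣ) (R : ℤ → Dˣ)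
    (C : Dˣ) (h : IsTwoTwoSolution R C)
    (hC : C = x * y * x⁻¹ * y⁻¹) (hR0 : R 0 = y * x * y⁻¹) (hR1 : R 1 = y) :
    ∀ n : ℤ,
      (R n : D) ∈ Subsemiring.closure
        ({(x : D), ((x⁻¹ : Dˣ) : D), (y : D), ((y⁻¹ : Dˣ) : D)} : Set D) := by
  intro n
  rcases le_or_gt 0 n with hn | hn
  · exact TwoTwoAux.forward x y R C h hC hR0 hR1 n hn
  · -- lift the commutator relation at index 0 to the unit group
    have i0 : C = (R 1)⁻¹ * R 0 * R 1 * (R 0)⁻¹ := by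
      have h0 := h.1 0
      rw [show (0:ℤ)+1 = 1 from by norm_num] at h0
      exact Units.ext (by simpa only [Units.val_mul] using h0)
    -- the reversed solution in the opposite division ring
    have hS : IsTwoTwoSolution (fun m : ℤ => TwoTwoAux.opU (R (1 - m))) (TwoTwoAux.opU C) := by
      constructor
      · intro m
        dsimp only
        rw [show (1:ℤ) - (m+1) = -m from by ring]
        simp only [TwoTwoAux.opU_inv, TwoTwoAux.opU_val, ← MulOpposite.op_mul]
        apply congrArg MulOpposite.op
        have hh := h.1 (-m)
        rw [show (-m:ℤ)+1 = 1-m from by ring] at hh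
        simp only [mul_assoc] at hh ⊢
        exact hh
      · intro m
        dsimp only
        rw [show (1:ℤ) - (m+1) = -m from by ring, show (1:ℤ) - (m-1) = 2-m from by ring]
        simp only [TwoTwoAux.opU_val, ← MulOpposite.op_mul, ← MulOpposite.op_pow,
          ← MulOpposite.op_one, ← MulOpposite.op_add]
        apply congrArg MulOpposite.op
        have hh := h.2 (1-m)
        rw [show (1:ℤ)-m+1 = 2-m from by ring, show (1:ℤ)-m-1 = -m from by ring] at hh
        simp only [mul_assoc] at hh ⊢
        exact hh
    have hC' : TwoTwoAux.opU C = TwoTwoAux.opU (R 1 * C) * TwoTwoAux.opU (R 0)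
        * (TwoTwoAux.opU (R 1 * C))⁻¹ * (TwoTwoAux.opU (R 0))⁻¹ := by
      rw [TwoTwoAux.opU_inv, TwoTwoAux.opU_inv, ← TwoTwoAux.opU_mul, ← TwoTwoAux.opU_mul,
        ← TwoTwoAux.opU_mul]
      exact congrArg TwoTwoAux.opU (by rw [i0]; group)
    have hS0 : (fun m : ℤ => TwoTwoAux.opU (R (1 - m))) 0
        = TwoTwoAux.opU (R 0) * TwoTwoAux.opU (R 1 * C) * (TwoTwoAux.opU (R 0))⁻¹ := by
      dsimp only
      rw [show (1:ℤ) - 0 = 1 from by norm_num]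
      rw [TwoTwoAux.opU_inv, ← TwoTwoAux.opU_mul, ← TwoTwoAux.opU_mul]
      exact congrArg TwoTwoAux.opU (by rw [i0]; group)
    have hS1 : (fun m : ℤ => TwoTwoAux.opU (R (1 - m))) 1 = TwoTwoAux.opU (R 0) := by
      dsimp only
      rw [show (1:ℤ) - 1 = 0 from by norm_num]
    have hpos := TwoTwoAux.forward (TwoTwoAux.opU (R 1 * C)) (TwoTwoAux.opU (R 0))
      (fun m : ℤ => TwoTwoAux.opU (R (1 - m))) (TwoTwoAux.opU C) hS hC' hS0 hS1
      (1 - n) (by omega)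
    have hpos' : ((TwoTwoAux.opU (R (1 - (1 - n))) : (Dᵐᵒᵖ)ˣ) : Dᵐᵒᵖ) ∈ Subsemiring.closure
        ({((TwoTwoAux.opU (R 1 * C) : (Dᵐᵒᵖ)ˣ) : Dᵐᵒᵖ),
          (((TwoTwoAux.opU (R 1 * C))⁻¹ : (Dᵐᵒᵖ)ˣ) : Dᵐᵒᵖ),
          ((TwoTwoAux.opU (R 0) : (Dᵐᵒᵖ)ˣ) : Dᵐᵒᵖ),
          (((TwoTwoAux.opU (R 0))⁻¹ : (Dᵐᵒᵖ)ˣ) : Dᵐᵒᵖ)} : Set Dᵐᵒᵖ) := hpos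
    rw [show (1:ℤ) - (1 - n) = n from by ring] at hpos'
    -- transfer membership back through `unop`
    have hX : (x:D) ∈ Subsemiring.closure
        ({(x : D), ((x⁻¹ : Dˣ) : D), (y : D), ((y⁻¹ : Dˣ) : D)} : Set D) :=
      Subsemiring.subset_closure (by simp)
    have hX' : ((x⁻¹:Dˣ):D) ∈ Subsemiring.closure
        ({(x : D), ((x⁻¹ : Dˣ) : D), (y : D), ((y⁻¹ : Dˣ) : D)} : Set D) :=
      Subsemiring.subset_closure (by simp)
    have hY : (y:D) ∈ Subsemiring.closure
        ({(x : D), ((x⁻¹ : Dˣ) : D), (y : D), ((y⁻¹ : Dˣ) : D)} : Set D) :=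
      Subsemiring.subset_closure (by simp)
    have hY' : ((y⁻¹:Dˣ):D) ∈ Subsemiring.closure
        ({(x : D), ((x⁻¹ : Dˣ) : D), (y : D), ((y⁻¹ : Dˣ) : D)} : Set D) :=
      Subsemiring.subset_closure (by simp)
    have trans : ∀ z ∈ Subsemiring.closure
        ({((TwoTwoAux.opU (R 1 * C) : (Dᵐᵒᵖ)ˣ) : Dᵐᵒᵖ),
          (((TwoTwoAux.opU (R 1 * C))⁻¹ : (Dᵐᵒᵖ)ˣ) : Dᵐᵒᵖ),
          ((TwoTwoAux.opU (R 0) : (Dᵐᵒᵖ)ˣ) : Dᵐᵒᵖ),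
          (((TwoTwoAux.opU (R 0))⁻¹ : (Dᵐᵒᵖ)ˣ) : Dᵐᵒᵖ)} : Set Dᵐᵒᵖ),
        MulOpposite.unop z ∈ Subsemiring.closure
          ({(x : D), ((x⁻¹ : Dˣ) : D), (y : D), ((y⁻¹ : Dˣ) : D)} : Set D) := by
      intro z hz
      induction hz using Subsemiring.closure_induction with
      | mem t ht =>
        simp only [Set.mem_insert_iff, Set.mem_singleton_iff] at ht
        rcases ht with rfl | rfl | rfl | rfl
        · simp only [TwoTwoAux.opU_val, MulOpposite.unop_op]
          rw [hR1, hC]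
          simp only [Units.val_mul]
          exact mul_mem hY (mul_mem (mul_mem (mul_mem hX hY) hX') hY')
        · simp only [TwoTwoAux.opU_inv, TwoTwoAux.opU_val, MulOpposite.unop_op]
          rw [show (R 1 * C)⁻¹ = C⁻¹ * (R 1)⁻¹ from mul_inv_rev _ _, hR1, hC]
          simp only [mul_inv_rev, inv_inv, Units.val_mul]
          repeat'
            first
              | exact hX | exact hX' | exact hY | exact hY' | apply mul_mem
        · simp only [TwoTwoAux.opU_val, MulOpposite.unop_op]
          rw [hR0]
          simp only [Units.val_mul]
          exact mul_mem (mul_mem hY hX) hY'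
        · simp only [TwoTwoAux.opU_inv, TwoTwoAux.opU_val, MulOpposite.unop_op]
          rw [hR0]
          simp only [mul_inv_rev, inv_inv, Units.val_mul]
          repeat'
            first
              | exact hX | exact hX' | exact hY | exact hY' | apply mul_mem
      | zero => simpa using zero_mem _
      | one => simpa using one_mem _
      | add a b ha hb hpa hpb =>
        rw [MulOpposite.unop_add]; exact add_mem hpa hpb
      | mul a b ha hb hpa hpb =>
        rw [MulOpposite.unop_mul]; exact mul_mem hpb hpa
    have := trans _ hpos'
    simpa only [TwoTwoAux.opU_val, MulOpposite.unop_op] using this
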